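/- For 2 - √3 ≤ α < 1/3, the function g(θ) = ((1-2α)θ - 1)/(αθ(θ-1)) is strictly increasing on the interval [1/(1-2α), 1/α], and its maximum value on this interval is (1-3α)/(1-α), attained at θ = 1/α. -/

import Mathlib

/-- For `2 - √3 ≤ α < 1/3`, the function `g(θ) = ((1-2α)θ - 1)/(αθ(θ-1))` is
strictly increasing on `[1/(1-2α), 1/α]`, and its maximum value on this interval
is `(1-3α)/(1-α)`, attained at `θ = 1/α`. -/
theorem stmt_5 (α : ℝ) (h0 : 2 - Real.sqrt 3 ≤ α) (h1 : α < 1 / 3) :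
    StrictMonoOn (fun θ : ℝ => ((1 - 2 * α) * θ - 1) / (α * θ * (θ - 1)))
      (Set.Icc (1 / (1 - 2 * α)) (1 / α)) ∧
    ((1 - 2 * α) * (1 / α) - 1) / (α * (1 / α) * (1 / α - 1)) = (1 - 3 * α) / (1 - α) ∧
    ∀ θ ∈ Set.Icc (1 / (1 - 2 * α)) (1 / α),
      ((1 - 2 * α) * θ - 1) / (α * θ * (θ - 1)) ≤ (1 - 3 * α) / (1 - α) := by
  have hs3 : Real.sqrt 3 < 2 := by
    nlinarith [Real.sq_sqrt (by norm_num : (3:ℝ) ≥ 0), Real.sqrt_nonneg 3]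
  have hα0 : 0 < α := by linarith
  have ha : 0 < 1 - 2 * α := by linarith
  have h3 : 0 < 1 - 3 * α := by linarith
  have hquad : α ^ 2 - 4 * α + 1 ≤ 0 := by
    nlinarith [Real.sq_sqrt (by norm_num : (3:ℝ) ≥ 0), Real.sqrt_nonneg 3]
  -- Strict monotonicity
  have hmono : StrictMonoOn (fun θ : ℝ => ((1 - 2 * α) * θ - 1) / (α * θ * (θ - 1)))
      (Set.Icc (1 / (1 - 2 * α)) (1 / α)) := by
    intro x hx y hy hxy
    obtain ⟨hx1, hx2⟩ := hx
    obtain ⟨hy1, hy2⟩ := hy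
    have hr : 1 ≤ (1 - 2 * α) * x := (div_le_iff₀ ha).mp hx1 |>.trans_eq (mul_comm _ _)
    have hs : 1 ≤ (1 - 2 * α) * y := (div_le_iff₀ ha).mp hy1 |>.trans_eq (mul_comm _ _)
    have hq : α * y ≤ 1 := by
      have := (le_div_iff₀ hα0).mp hy2; linarith [this]
    have hp : α * x < 1 := by
      have : α * y ≤ 1 := hq
      nlinarith
    have hx1' : 1 < x := by nlinarith
    have hy1' : 1 < y := by nlinarith
    have hdx : 0 < α * x * (x - 1) := mul_pos (mul_pos hα0 (by linarith)) (by linarith)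
    have hdy : 0 < α * y * (y - 1) := mul_pos (mul_pos hα0 (by linarith)) (by linarith)
    simp only
    rw [div_lt_div_iff₀ hdx hdy]
    nlinarith [mul_nonneg (sub_nonneg.mpr hq) (sub_nonneg.mpr hr), hquad,
      mul_pos (sub_pos.mpr hp) h3, mul_pos (sub_pos.mpr hxy) hα0,
      mul_nonneg (sub_nonneg.mpr hs) (le_of_lt (sub_pos.mpr hp))]
  have hαne : α ≠ 0 := ne_of_gt hα0
  have h1α : (0:ℝ) < 1 - α := by linarith
  have hval : ((1 - 2 * α) * (1 / α) - 1) / (α * (1 / α) * (1 / α - 1)) = (1 - 3 * α) / (1 - α) := by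
    have h2 : (1 - α) ≠ 0 := ne_of_gt h1α
    rw [div_eq_div_iff]
    · field_simp
      ring
    · have e1 : α * (1 / α) = 1 := by field_simp
      rw [e1]
      have e2 : 1 / α - 1 = (1 - α) / α := by field_simp
      rw [e2]
      positivity
    · exact h2
  refine ⟨hmono, hval, ?_⟩
  intro θ hθ
  have hmem : 1 / α ∈ Set.Icc (1 / (1 - 2 * α)) (1 / α) := by
    constructor
    · rw [div_le_div_iff₀ ha hα0]; linarith
    · exact le_rfl
  have h := hmono.monotoneOn hθ hmem hθ.2
  calc ((1 - 2 * α) * θ - 1) / (α * θ * (θ - 1)) ≤ _ := h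
    _ = (1 - 3 * α) / (1 - α) := hval
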